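/- Let p be an odd prime, b* = Λ(σ)⊗F_p[τ] with Bockstein β and power operations P^i acting as a module over the mod-p Steenrod algebra A*. For a representation sphere S^W with W^G ≠ W, let b*S^W ⊂ b*S^{W^G} ≅ Σ^{d} b* (d = dim_R W^G) be the free b*-submodule generated by τ^k·θ, with k = k(W) = (dim_R W - dim_R W^G)/2 > 0 and θ the b*-generator of Σ^d b*. Then every degree-preserving map of graded b*-modules from b*S^W to any shift Σ^t b* that commutes with β and with all P^i is zero unless t = d, and for t = d the space of such maps is one-dimensional, spanned by the inclusion followed by the identification. -/
import Mathlib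


noncomputable section

abbrev Bpoly (p : ℕ) := MvPolynomial (Fin 2) (ZMod p)
abbrev Brel (p : ℕ) : Ideal (Bpoly p) := Ideal.span {(MvPolynomial.X 0 : Bpoly p) ^ 2}
/-- `B p` models `b* = Λ(σ) ⊗ F_p[τ]`. -/
abbrev B (p : ℕ) := Bpoly p ⧸ Brel p

/-- σ (degree 1) -/
def sg (p : ℕ) : B p := Ideal.Quotient.mk _ (MvPolynomial.X 0)
/-- τ (degree 2) -/
def tg (p : ℕ) : B p := Ideal.Quotient.mk _ (MvPolynomial.X 1)

/-- degree-`n` component of `b*` -/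
def comp (p n : ℕ) : Submodule (ZMod p) (B p) :=
  Submodule.span (ZMod p) {x | ∃ a b : ℕ, a ≤ 1 ∧ a + 2 * b = n ∧ x = sg p ^ a * tg p ^ b}

/-- components indexed by integers (zero in negative degrees) -/
def compZ (p : ℕ) (i : ℤ) : Submodule (ZMod p) (B p) :=
  if i < 0 then ⊥ else comp p i.toNat

lemma tg_pow_ne (p : ℕ) [Fact p.Prime] (m : ℕ) : tg p ^ m ≠ 0 := by
  have h0 : ∀ a ∈ Brel p, MvPolynomial.eval (fun i : Fin 2 => if i = 0 then (0 : ZMod p) else 1) a = 0 := by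
    intro a ha
    rw [Brel, Ideal.mem_span_singleton] at ha
    obtain ⟨q, rfl⟩ := ha
    simp
  set φ := Ideal.Quotient.lift (Brel p)
    ((MvPolynomial.eval (fun i : Fin 2 => if i = 0 then (0 : ZMod p) else 1))) h0
  intro h
  have : φ (tg p ^ m) = 1 := by
    rw [map_pow]
    simp [tg, φ]
  rw [h, map_zero] at this
  exact one_ne_zero this.symm

lemma smul_cases {p : ℕ} [Fact p.Prime] {c : ZMod p} {x : B p} (h : c • x = 0) :
    c = 0 ∨ x = 0 := by
  by_cases hc : c = 0
  · exact Or.inl hc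
  · right
    have h2 := congrArg (fun z => c⁻¹ • z) h
    simpa [smul_smul, inv_mul_cancel₀ hc] using h2

lemma comp_eq (p n : ℕ) :
    comp p n = Submodule.span (ZMod p) {sg p ^ (n % 2) * tg p ^ (n / 2)} := by
  rw [comp]
  congr 1
  ext x
  constructor
  · rintro ⟨a, b, ha, hab, rfl⟩
    have h1 : a = n % 2 := by omega
    have h2 : b = n / 2 := by omega
    simp [h1, h2]
  · rintro rfl
    exact ⟨n % 2, n / 2, by omega, by omega, rfl⟩

/-- `b*S^W` is the free `b*`-module on a generator `θ(W)` of degree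
`d + 2k` (`d = dim W^G`, `k = k(W) > 0`), included in `Σ^d b*` via `θ(W) ↦ τ^k`.
A degree-preserving `b*`-linear map `b*S^W → Σ^t b*` is determined by the image `y` of
`θ(W)`, homogeneous of degree `d + 2k - t`; compatibility with `β` and all `P^i` says
`β(y) = 0` and `P^i(y) = C(k,i)·τ^{i(p-1)}·y` (mirroring the `A*`-action on `τ^k·θ`).
Any such map is zero unless `t = d`, and for `t = d` the space of such maps is
one-dimensional, spanned by `y = τ^k`. -/
theorem stmt11 (p : ℕ) [Fact p.Prime] (hodd : Odd p)
    (β : B p →ₗ[ZMod p] B p)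
    (hβτ : ∀ l : ℕ, β (tg p ^ l) = 0)
    (hβστ : ∀ l : ℕ, β (sg p * tg p ^ l) = tg p ^ (l + 1))
    (Pi : ℕ → B p →ₗ[ZMod p] B p)
    (hPiτ : ∀ (i l : ℕ), Pi i (tg p ^ l) = (Nat.choose l i : ZMod p) • tg p ^ (l + i * (p - 1)))
    (hPiστ : ∀ (i l : ℕ),
      Pi i (sg p * tg p ^ l) = (Nat.choose l i : ZMod p) • (sg p * tg p ^ (l + i * (p - 1))))
    (d k : ℕ) (hk : 0 < k) (t : ℤ) :
    (∀ y : B p, y ∈ compZ p ((d : ℤ) + 2 * k - t) → β y = 0 →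
      (∀ i : ℕ, Pi i y = (Nat.choose k i : ZMod p) • (tg p ^ (i * (p - 1)) * y)) →
      t ≠ (d : ℤ) → y = 0) ∧
    (∀ y : B p,
      (y ∈ comp p (2 * k) ∧ β y = 0 ∧
        (∀ i : ℕ, Pi i y = (Nat.choose k i : ZMod p) • (tg p ^ (i * (p - 1)) * y))) ↔
      ∃ c : ZMod p, y = c • tg p ^ k) := by
  constructor
  · intro y hy hβ hP ht
    by_cases hneg : ((d : ℤ) + 2 * k - t) < 0
    · rw [compZ, if_pos hneg, Submodule.mem_bot] at hy; exact hy
    · rw [compZ, if_neg hneg, comp_eq, Submodule.mem_span_singleton] at hy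
      obtain ⟨c, rfl⟩ := hy
      set n := ((d : ℤ) + 2 * k - t).toNat with hn
      have hnZ : (n : ℤ) = (d : ℤ) + 2 * k - t := Int.toNat_of_nonneg (by omega)
      have hn2k : n ≠ 2 * k := by omega
      rcases Nat.even_or_odd n with he | ho
      · -- even case
        have h0 : n % 2 = 0 := Nat.even_iff.mp he
        set l := n / 2 with hl
        have hlk : l ≠ k := by omega
        rw [h0, pow_zero, one_mul] at hβ hP ⊢
        set M := max k l with hM
        have hPM := hP M
        rw [map_smul, hPiτ] at hPM
        have hE : (c * (Nat.choose l M : ZMod p)) • tg p ^ (l + M * (p - 1))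
            = ((Nat.choose k M : ZMod p) * c) • tg p ^ (l + M * (p - 1)) := by
          rw [← smul_smul, ← smul_smul, hPM, mul_smul_comm, ← pow_add, add_comm]
        have hc : c * (Nat.choose l M : ZMod p) = (Nat.choose k M : ZMod p) * c := by
          have hz : (c * (Nat.choose l M : ZMod p) - (Nat.choose k M : ZMod p) * c)
              • tg p ^ (l + M * (p - 1)) = 0 := by
            rw [sub_smul, hE, sub_self]
          rcases smul_cases hz with h | h
          · exact sub_eq_zero.mp h
          · exact absurd h (tg_pow_ne p _)
        rcases lt_or_gt_of_ne hlk with hlt | hgt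
        · have hMk : M = k := by omega
          rw [hMk, Nat.choose_eq_zero_of_lt hlt, Nat.choose_self] at hc
          push_cast at hc
          have : c = 0 := by simpa using hc.symm
          simp [this]
        · have hMl : M = l := by omega
          rw [hMl, Nat.choose_self, Nat.choose_eq_zero_of_lt hgt] at hc
          push_cast at hc
          have : c = 0 := by simpa using hc
          simp [this]
      · -- odd case
        have h1 : n % 2 = 1 := Nat.odd_iff.mp ho
        rw [h1, pow_one] at hβ ⊢
        rw [map_smul, hβστ] at hβ
        rcases smul_cases hβ with h | h
        · simp [h]
        · exact absurd h (tg_pow_ne p _)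
  · intro y
    constructor
    · rintro ⟨hy, -, -⟩
      rw [comp_eq] at hy
      have h0 : 2 * k % 2 = 0 := by omega
      have h1 : 2 * k / 2 = k := by omega
      rw [h0, h1, pow_zero, one_mul, Submodule.mem_span_singleton] at hy
      obtain ⟨c, rfl⟩ := hy
      exact ⟨c, rfl⟩
    · rintro ⟨c, rfl⟩
      refine ⟨?_, ?_, ?_⟩
      · rw [comp_eq]
        have h0 : 2 * k % 2 = 0 := by omega
        have h1 : 2 * k / 2 = k := by omega
        rw [h0, h1, pow_zero, one_mul]
        exact Submodule.smul_mem _ _ (Submodule.mem_span_singleton_self _)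
      · rw [map_smul, hβτ, smul_zero]
      · intro i
        rw [map_smul, hPiτ, mul_smul_comm, ← pow_add, smul_smul, smul_smul,
          mul_comm, add_comm]
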